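/- The Lyapunov function L = ½(I + P)² is nonincreasing along IPSR trajectories: if I, P, S ≥ 0 satisfy the IPSR equations, then dL/dt = (I+P)·(-(α+γ)k·I·S - (σ+ρ)k·P·S) ≤ 0, with dL/dt = 0 whenever S = 0. -/

import Mathlib

/-- The Lyapunov function L = ½(I+P)² is nonincreasing along IPSR trajectories. -/
theorem ipsr_lyapunov (α γ σ ρ δ μ k : ℝ)
    (hα : 0 < α) (hγ : 0 < γ) (hσ : 0 < σ) (hρ : 0 < ρ)
    (hδ : 0 < δ) (hμ : 0 < μ) (hk : 0 < k)
    (I P S : ℝ → ℝ)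
    (hInn : ∀ t, 0 ≤ I t) (hPnn : ∀ t, 0 ≤ P t) (hSnn : ∀ t, 0 ≤ S t)
    (hI : ∀ t, HasDerivAt I (-δ * I t - (α + γ) * k * I t * S t + μ * P t) t)
    (hP : ∀ t, HasDerivAt P (δ * I t - (σ + ρ) * k * P t * S t - μ * P t) t) :
    ∀ t : ℝ,
      HasDerivAt (fun u => (1 / 2) * (I u + P u) ^ 2)
        ((I t + P t) * (-(α + γ) * k * I t * S t - (σ + ρ) * k * P t * S t)) t ∧
      (I t + P t) * (-(α + γ) * k * I t * S t - (σ + ρ) * k * P t * S t) ≤ 0 ∧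
      (S t = 0 →
        (I t + P t) * (-(α + γ) * k * I t * S t - (σ + ρ) * k * P t * S t) = 0) := by
  intro t
  refine ⟨?_, ?_, ?_⟩
  · have h := (((hI t).add (hP t)).pow 2).const_mul (1/2 : ℝ)
    convert h using 1
    · rfl
    · rfl
    · rfl
    · simp; ring
  · apply mul_nonpos_of_nonneg_of_nonpos
    · exact add_nonneg (hInn t) (hPnn t)
    · have h1 : 0 ≤ (α + γ) * k * I t * S t := mul_nonneg (mul_nonneg (mul_nonneg (by linarith) hk.le) (hInn t)) (hSnn t)
      have h2 : 0 ≤ (σ + ρ) * k * P t * S t := mul_nonneg (mul_nonneg (mul_nonneg (by linarith) hk.le) (hPnn t)) (hSnn t)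
      linarith
  · intro h; rw [h]; ring
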